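/- arXiv:2311.03080 — 3 statements merged into one kernel-verified Lean document; each statement's English description precedes it below -/
import Mathlib

section
/- The polynomial q(x) = 4823x⁶ − 5915x⁴ + 1665x² − 61 has exactly six distinct real roots, all lying in the open interval (−1, 1), and the set of roots is symmetric about 0 (i.e., q(x)=0 implies q(−x)=0). -/
set_option linter.unnecessarySeqFocus false

open Polynomial Set

private noncomputable def qpoly : Polynomial ℝ :=
  C 4823 * X ^ 6 - C 5915 * X ^ 4 + C 1665 * X ^ 2 - C 61

private lemma qpoly_eval (x : ℝ) :
    qpoly.eval x = 4823 * x ^ 6 - 5915 * x ^ 4 + 1665 * x ^ 2 - 61 := by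
  simp [qpoly]

private lemma qpoly_ne_zero : qpoly ≠ 0 := by
  intro h
  have := qpoly_eval 0
  rw [h] at this
  norm_num at this

private lemma qpoly_natDegree : qpoly.natDegree = 6 := by
  unfold qpoly
  compute_degree!

/-- The polynomial `q(x) = 4823x⁶ − 5915x⁴ + 1665x² − 61` has exactly six distinct real
roots, all lying in `(−1, 1)`, and the set of roots is symmetric about `0`. -/
theorem roots_sextic_p9 :
    {x : ℝ | 4823 * x ^ 6 - 5915 * x ^ 4 + 1665 * x ^ 2 - 61 = 0}.ncard = 6 ∧
    (∀ x : ℝ, 4823 * x ^ 6 - 5915 * x ^ 4 + 1665 * x ^ 2 - 61 = 0 →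
      x ∈ Set.Ioo (-1 : ℝ) 1) ∧
    (∀ x : ℝ, 4823 * x ^ 6 - 5915 * x ^ 4 + 1665 * x ^ 2 - 61 = 0 →
      4823 * (-x) ^ 6 - 5915 * (-x) ^ 4 + 1665 * (-x) ^ 2 - 61 = 0) := by
  set f : ℝ → ℝ := fun x => 4823 * x ^ 6 - 5915 * x ^ 4 + 1665 * x ^ 2 - 61 with hf
  set S : Set ℝ := {x : ℝ | f x = 0} with hS
  have hc : Continuous f := by continuity
  have hSroot : S = {x : ℝ | qpoly.IsRoot x} := by
    ext x; simp [hS, IsRoot, qpoly_eval, hf]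
  have hSfin : S.Finite := by
    rw [hSroot]; exact Polynomial.finite_setOf_isRoot qpoly_ne_zero
  -- symmetry
  have hsym : ∀ x : ℝ, f x = 0 → f (-x) = 0 := by
    intro x hx
    simp only [hf] at hx ⊢
    nlinarith [hx]
  -- membership in (-1,1)
  have hmem : ∀ x : ℝ, f x = 0 → x ∈ Set.Ioo (-1 : ℝ) 1 := by
    intro x hx
    by_contra h
    have hx2 : (1 : ℝ) ≤ x ^ 2 := by
      simp only [Set.mem_Ioo, not_and_or, not_lt] at h
      rcases h with h | h
      · nlinarith
      · nlinarith
    have : f x > 0 := by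
      simp only [hf]
      nlinarith [sq_nonneg (x ^ 2 - 1), sq_nonneg x, mul_nonneg (sub_nonneg.mpr hx2) (sq_nonneg (x^2 - 1))]
    simp only [hf] at this hx
    linarith
  -- three positive roots via IVT
  obtain ⟨a, ha, hfa⟩ : ∃ x ∈ Set.Ioo (0 : ℝ) (3/10), f x = 0 := by
    have h := intermediate_value_Ioo (by norm_num : (0:ℝ) ≤ 3/10) hc.continuousOn
    have h0 : (0 : ℝ) ∈ Set.Ioo (f 0) (f (3/10)) := by
      constructor <;> simp [hf] <;> norm_num
    obtain ⟨x, hx, hfx⟩ := h h0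
    exact ⟨x, hx, hfx⟩
  obtain ⟨b, hb, hfb⟩ : ∃ x ∈ Set.Ioo (1/2 : ℝ) (7/10), f x = 0 := by
    have h := intermediate_value_Ioo' (by norm_num : (1/2:ℝ) ≤ 7/10) hc.continuousOn
    have h0 : (0 : ℝ) ∈ Set.Ioo (f (7/10)) (f (1/2)) := by
      constructor <;> simp [hf] <;> norm_num
    obtain ⟨x, hx, hfx⟩ := h h0
    exact ⟨x, hx, hfx⟩
  obtain ⟨c, hcc, hfc⟩ : ∃ x ∈ Set.Ioo (7/10 : ℝ) 1, f x = 0 := by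
    have h := intermediate_value_Ioo (by norm_num : (7/10:ℝ) ≤ 1) hc.continuousOn
    have h0 : (0 : ℝ) ∈ Set.Ioo (f (7/10)) (f 1) := by
      constructor <;> simp [hf] <;> norm_num
    obtain ⟨x, hx, hfx⟩ := h h0
    exact ⟨x, hx, hfx⟩
  obtain ⟨ha0, ha3⟩ := ha
  obtain ⟨hb1, hb2⟩ := hb
  obtain ⟨hc1, hc2⟩ := hcc
  -- the six roots are distinct
  
  have hsub : (↑({a, b, c, -a, -b, -c} : Finset ℝ) : Set ℝ) ⊆ S := by
    intro x hx
    simp only [Finset.coe_insert, Finset.coe_singleton, Set.mem_insert_iff,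
      Set.mem_singleton_iff] at hx
    rcases hx with rfl | rfl | rfl | rfl | rfl | rfl
    · exact hfa
    · exact hfb
    · exact hfc
    · exact hsym a hfa
    · exact hsym b hfb
    · exact hsym c hfc
  have hcard : ({a, b, c, -a, -b, -c} : Finset ℝ).card = 6 := by
    rw [Finset.card_insert_of_notMem (by
      simp only [Finset.mem_insert, Finset.mem_singleton]
      push_neg
      refine ⟨by linarith, by linarith, by linarith, by linarith, by linarith⟩)]
    rw [Finset.card_insert_of_notMem (by
      simp only [Finset.mem_insert, Finset.mem_singleton]
      push_neg
      refine ⟨by linarith, by linarith, by linarith, by linarith⟩)]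
    rw [Finset.card_insert_of_notMem (by
      simp only [Finset.mem_insert, Finset.mem_singleton]
      push_neg
      refine ⟨by linarith, by linarith, by linarith⟩)]
    rw [Finset.card_insert_of_notMem (by
      simp only [Finset.mem_insert, Finset.mem_singleton]
      push_neg
      refine ⟨by linarith, by linarith⟩)]
    rw [Finset.card_insert_of_notMem (by
      simp only [Finset.mem_singleton]
      intro h; linarith)]
    simp
  have hge : 6 ≤ S.ncard := by
    calc 6 = (↑({a, b, c, -a, -b, -c} : Finset ℝ) : Set ℝ).ncard := by
            rw [Set.ncard_coe_finset, hcard]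
      _ ≤ S.ncard := Set.ncard_le_ncard hsub hSfin
  have hle : S.ncard ≤ 6 := by
    have heq : S = (↑qpoly.roots.toFinset : Set ℝ) := by
      rw [hSroot]
      ext x
      simp [Polynomial.mem_roots', qpoly_ne_zero]
    rw [heq, Set.ncard_coe_finset]
    calc qpoly.roots.toFinset.card ≤ Multiset.card qpoly.roots :=
          qpoly.roots.toFinset_card_le
      _ ≤ qpoly.natDegree := qpoly.card_roots'
      _ = 6 := qpoly_natDegree
  exact ⟨le_antisymm hle hge, hmem, hsym⟩
end

section
/- For the polynomial q(x) = 4823x⁶ − 5915x⁴ + 1665x² − 61, the substitution t = x² yields a cubic 4823t³ − 5915t² + 1665t − 61 that has three distinct real roots, all lying in the open interval (0, 1). -/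
open Polynomial Set

private noncomputable def cubP : ℝ[X] := C 4823 * X ^ 3 - C 5915 * X ^ 2 + C 1665 * X - C 61

private lemma cubP_eval (t : ℝ) :
    cubP.eval t = 4823 * t ^ 3 - 5915 * t ^ 2 + 1665 * t - 61 := by
  simp [cubP]

private lemma cubP_ne_zero : cubP ≠ 0 := by
  intro h
  have := cubP_eval 1
  rw [h] at this
  norm_num at this

private lemma cubP_natDegree_le : cubP.natDegree ≤ 3 := by
  unfold cubP
  compute_degree

private lemma cont : Continuous fun t : ℝ => 4823 * t ^ 3 - 5915 * t ^ 2 + 1665 * t - 61 := by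
  fun_prop

private lemma exists_root_Ioo_inc (a b : ℝ) (hab : a ≤ b)
    (ha : 4823 * a ^ 3 - 5915 * a ^ 2 + 1665 * a - 61 < 0)
    (hb : 0 < 4823 * b ^ 3 - 5915 * b ^ 2 + 1665 * b - 61) :
    ∃ t ∈ Set.Ioo a b, 4823 * t ^ 3 - 5915 * t ^ 2 + 1665 * t - 61 = 0 := by
  have h := intermediate_value_Ioo hab (cont.continuousOn)
  have h0 : (0 : ℝ) ∈ Set.Ioo (4823 * a ^ 3 - 5915 * a ^ 2 + 1665 * a - 61)
      (4823 * b ^ 3 - 5915 * b ^ 2 + 1665 * b - 61) := ⟨ha, hb⟩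
  obtain ⟨t, ht, ht0⟩ := h h0
  exact ⟨t, ht, ht0⟩

private lemma exists_root_Ioo_dec (a b : ℝ) (hab : a ≤ b)
    (ha : 0 < 4823 * a ^ 3 - 5915 * a ^ 2 + 1665 * a - 61)
    (hb : 4823 * b ^ 3 - 5915 * b ^ 2 + 1665 * b - 61 < 0) :
    ∃ t ∈ Set.Ioo a b, 4823 * t ^ 3 - 5915 * t ^ 2 + 1665 * t - 61 = 0 := by
  have h := intermediate_value_Ioo' hab (cont.continuousOn)
  obtain ⟨t, ht, ht0⟩ := h ⟨hb, ha⟩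
  exact ⟨t, ht, ht0⟩

/-- Under the substitution `t = x²`, the sextic `4823x⁶ − 5915x⁴ + 1665x² − 61` becomes the
cubic `4823t³ − 5915t² + 1665t − 61`, which has three distinct real roots, all in `(0, 1)`. -/
theorem roots_cubic_in_t :
    (∀ x : ℝ, 4823 * x ^ 6 - 5915 * x ^ 4 + 1665 * x ^ 2 - 61 =
      4823 * (x ^ 2) ^ 3 - 5915 * (x ^ 2) ^ 2 + 1665 * (x ^ 2) - 61) ∧
    {t : ℝ | 4823 * t ^ 3 - 5915 * t ^ 2 + 1665 * t - 61 = 0}.ncard = 3 ∧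
    ∀ t : ℝ, 4823 * t ^ 3 - 5915 * t ^ 2 + 1665 * t - 61 = 0 → t ∈ Set.Ioo (0 : ℝ) 1 := by
  set S : Set ℝ := {t : ℝ | 4823 * t ^ 3 - 5915 * t ^ 2 + 1665 * t - 61 = 0} with hS
  -- roots via IVT
  obtain ⟨a, ha, ha0⟩ := exists_root_Ioo_inc 0 (1/10) (by norm_num) (by norm_num) (by norm_num)
  obtain ⟨b, hb, hb0⟩ := exists_root_Ioo_dec (1/10) (1/2) (by norm_num) (by norm_num) (by norm_num)
  obtain ⟨c, hc, hc0⟩ := exists_root_Ioo_inc (1/2) 1 (by norm_num) (by norm_num) (by norm_num)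
  have hab : a ≠ b := ne_of_lt (lt_trans ha.2 hb.1)
  have hbc : b ≠ c := ne_of_lt (lt_trans hb.2 hc.1)
  have hac : a ≠ c := ne_of_lt (lt_trans ha.2 (lt_trans hb.1 (lt_trans hb.2 hc.1)))
  -- S ⊆ finset of polynomial roots
  have hsub : S ⊆ (cubP.roots.toFinset : Set ℝ) := by
    intro t ht
    simp only [Finset.coe_sort_coe, Multiset.mem_toFinset, Finset.mem_coe]
    rw [mem_roots cubP_ne_zero, IsRoot, cubP_eval]
    exact ht
  have hScard : S.ncard ≤ 3 := by
    calc S.ncard ≤ (cubP.roots.toFinset : Set ℝ).ncard :=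
          Set.ncard_le_ncard hsub (cubP.roots.toFinset.finite_toSet)
      _ = cubP.roots.toFinset.card := Set.ncard_coe_finset _
      _ ≤ Multiset.card cubP.roots := Multiset.toFinset_card_le _
      _ ≤ cubP.natDegree := cubP.card_roots'
      _ ≤ 3 := cubP_natDegree_le
  have habcS : ({a, b, c} : Set ℝ) ⊆ S := by
    intro t ht
    rcases ht with rfl | rfl | rfl
    · exact ha0
    · exact hb0
    · exact hc0
  have habc_card : ({a, b, c} : Set ℝ).ncard = 3 := by
    rw [Set.ncard_eq_three]
    exact ⟨a, b, c, hab, hac, hbc, rfl⟩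
  have hSfin : S.Finite := (cubP.roots.toFinset.finite_toSet).subset hsub
  have hEq : ({a, b, c} : Set ℝ) = S :=
    Set.eq_of_subset_of_ncard_le habcS (habc_card ▸ hScard) hSfin
  refine ⟨fun x => by ring, ?_, ?_⟩
  · rw [← hEq, habc_card]
  · intro t ht
    have : t ∈ ({a, b, c} : Set ℝ) := hEq ▸ ht
    rcases this with rfl | rfl | rfl
    · exact ⟨ha.1, lt_trans ha.2 (by norm_num)⟩
    · exact ⟨lt_trans (by norm_num) hb.1, lt_trans hb.2 (by norm_num)⟩
    · exact ⟨lt_trans (by norm_num) hc.1, hc.2⟩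
end

section
/- For the spline space S_h^{p,3}([0,1]) with p = 7 (and likewise p = 8), no Greville point ζ_j = (t_{j+1} + … + t_{j+p})/p coincides with any inner knot j'/(k+1), j' = 1,…,k, for any number k ≥ 1 of inner knots. -/
/-- The open uniform knot vector of `S_h^{p,r}([0,1])`: end knots `0` and `1` of
multiplicity `p+1`, inner knots `j/(k+1)`, `j = 1,…,k`, each of multiplicity `p−r`. -/
noncomputable def knot (p r k : ℕ) (j : ℕ) : ℝ :=
  if j ≤ p then 0
  else if p + k * (p - r) < j then 1
  else (((j - p - 1) / (p - r) + 1 : ℕ) : ℝ) / (k + 1)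

/-- The Greville points `ζ_j = (t_{j+1} + … + t_{j+p})/p`. -/
noncomputable def greville (p r k : ℕ) (j : ℕ) : ℝ :=
  (∑ i ∈ Finset.range p, knot p r k (j + 1 + i)) / p

lemma countLt (N a b : ℕ) :
    (∑ i ∈ Finset.range N, if a < b + i then (1 : ℕ) else 0) = N - (a + 1 - b) := by
  induction N with
  | zero => simp
  | succ n ih => rw [Finset.sum_range_succ, ih]; split_ifs <;> omega

lemma countLt2 (N D : ℕ) :
    (∑ m ∈ Finset.range N, if m < D then (1 : ℕ) else 0) = min N D := by
  induction N with
  | zero => simp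
  | succ n ih => rw [Finset.sum_range_succ, ih]; split_ifs <;> omega

lemma step (p q j n : ℕ) :
    (∑ m ∈ Finset.range (n + 1), min p (j - m * q))
      = (∑ m ∈ Finset.range n, min p (j - q - m * q)) + min p (j - 0 * q) := by
  rw [Finset.sum_range_succ']
  congr 1
  refine Finset.sum_congr rfl fun m _ => ?_
  have h : (m + 1) * q = q + m * q := by ring
  rw [h, ← Nat.sub_sub]

/-- Closed form for the scaled Greville sum `T(j) = ∑_{m≤k} min p (j−mq)`. -/
lemma sumEval (p q : ℕ) (hpq : p = 7 ∧ q = 4 ∨ p = 8 ∧ q = 5) :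
    ∀ N, ∀ j ≤ q * N + 3,
      (∑ m ∈ Finset.range N, min p (j - m * q)) =
        p * (j / q - 1) + (if 1 ≤ j / q then min p (q + j % q) else 0)
          + (if j / q < N then j % q else 0) := by
  intro N
  induction N with
  | zero =>
    intro j hj
    obtain ⟨rfl, rfl⟩ | ⟨rfl, rfl⟩ := hpq <;>
      (rw [Finset.sum_range_zero]; split_ifs <;> omega)
  | succ n ih =>
    intro j hj
    rw [step, ih (j - q) (by rw [Nat.mul_succ] at hj; omega)]
    obtain ⟨rfl, rfl⟩ | ⟨rfl, rfl⟩ := hpq <;> (split_ifs <;> omega)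

/-- Core arithmetic fact: the scaled Greville sum is never `p * j'`. -/
lemma core (p q k j j' : ℕ) (hpq : p = 7 ∧ q = 4 ∨ p = 8 ∧ q = 5)
    (hj : j ≤ p + k * q) (h1 : 1 ≤ j') (h2 : j' ≤ k) :
    (∑ m ∈ Finset.range (k + 1), min p (j - m * q)) ≠ p * j' := by
  rw [sumEval p q hpq (k + 1) j
    (by obtain ⟨rfl, rfl⟩ | ⟨rfl, rfl⟩ := hpq <;> omega)]
  obtain ⟨rfl, rfl⟩ | ⟨rfl, rfl⟩ := hpq <;> (split_ifs <;> omega)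

/-- The knot, scaled by `k+1`, as a counting function. -/
lemma knot_eq (p q k n : ℕ) (hpq : p = 7 ∧ q = 4 ∨ p = 8 ∧ q = 5) :
    knot p 3 k n
      = ((∑ m ∈ Finset.range (k + 1), if p + m * q < n then (1 : ℕ) else 0 : ℕ) : ℝ)
          / (k + 1) := by
  have hq3 : p - 3 = q := by obtain ⟨rfl, rfl⟩ | ⟨rfl, rfl⟩ := hpq <;> rfl
  unfold knot
  rw [hq3]
  by_cases h1 : n ≤ p
  · rw [if_pos h1, Finset.sum_eq_zero (fun m _ => if_neg (by omega))]
    simp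
  · rw [if_neg h1]
    by_cases h2 : p + k * q < n
    · rw [if_pos h2]
      have hall : ∀ m ∈ Finset.range (k + 1),
          (if p + m * q < n then (1 : ℕ) else 0) = 1 := by
        intro m hm
        rw [Finset.mem_range] at hm
        refine if_pos ?_
        have : m * q ≤ k * q := Nat.mul_le_mul_right _ (by omega)
        omega
      rw [Finset.sum_congr rfl hall, Finset.sum_const, Finset.card_range, smul_eq_mul,
        mul_one]
      rw [eq_div_iff (by positivity), one_mul]
      push_cast
      ring
    · rw [if_neg h2]
      have hiff : ∀ m, (p + m * q < n) ↔ (m < (n - p - 1) / q + 1) := by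
        intro m
        obtain ⟨rfl, rfl⟩ | ⟨rfl, rfl⟩ := hpq <;> omega
      have hsum : (∑ m ∈ Finset.range (k + 1), if p + m * q < n then (1 : ℕ) else 0)
          = min (k + 1) ((n - p - 1) / q + 1) := by
        rw [Finset.sum_congr rfl (fun m _ => if_congr (hiff m) rfl rfl), countLt2]
      rw [hsum]
      have hmin : min (k + 1) ((n - p - 1) / q + 1) = (n - p - 1) / q + 1 := by
        obtain ⟨rfl, rfl⟩ | ⟨rfl, rfl⟩ := hpq <;> omega
      rw [hmin]

/-- The Greville point as a scaled natural number. -/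
lemma greville_eq (p q k j : ℕ) (hpq : p = 7 ∧ q = 4 ∨ p = 8 ∧ q = 5) :
    greville p 3 k j
      = ((∑ m ∈ Finset.range (k + 1), min p (j - m * q) : ℕ) : ℝ) / (p * (k + 1)) := by
  unfold greville
  have h1 : ∀ i ∈ Finset.range p, knot p 3 k (j + 1 + i)
      = ((∑ m ∈ Finset.range (k + 1), if p + m * q < j + 1 + i then (1 : ℕ) else 0 : ℕ) : ℝ)
          / (k + 1) := fun i _ => knot_eq p q k (j + 1 + i) hpq
  rw [Finset.sum_congr rfl h1, ← Finset.sum_div, ← Nat.cast_sum, Finset.sum_comm]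
  have h2 : (∑ m ∈ Finset.range (k + 1), ∑ i ∈ Finset.range p,
      if p + m * q < j + 1 + i then (1 : ℕ) else 0)
      = ∑ m ∈ Finset.range (k + 1), min p (j - m * q) := by
    refine Finset.sum_congr rfl fun m _ => ?_
    rw [countLt]
    obtain ⟨rfl, rfl⟩ | ⟨rfl, rfl⟩ := hpq <;> omega
  rw [h2, div_div, mul_comm]

/-- For `S_h^{p,3}([0,1])` with `p = 7` or `p = 8`, no Greville point coincides with any
inner knot `j'/(k+1)`, for any number `k ≥ 1` of inner knots. -/
theorem greville_avoid_inner_knots :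
    ∀ p ∈ ({7, 8} : Set ℕ), ∀ k : ℕ, 1 ≤ k →
      ∀ j < p + 1 + k * (p - 3), ∀ j' : ℕ, 1 ≤ j' → j' ≤ k →
        greville p 3 k j ≠ (j' : ℝ) / (k + 1) := by
  intro p hp k hk j hj j' h1 h2
  have hpq : p = 7 ∧ p - 3 = 4 ∨ p = 8 ∧ p - 3 = 5 := by
    rcases hp with rfl | rfl
    · left; exact ⟨rfl, rfl⟩
    · right; exact ⟨rfl, rfl⟩
  rw [greville_eq p (p - 3) k j hpq]
  set T := ∑ m ∈ Finset.range (k + 1), min p (j - m * (p - 3)) with hT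
  intro h
  have hk1 : ((k : ℝ) + 1) ≠ 0 := by positivity
  have hpk : ((p : ℝ) * ((k : ℝ) + 1)) ≠ 0 := by
    obtain ⟨rfl, -⟩ | ⟨rfl, -⟩ := hpq <;> positivity
  rw [div_eq_div_iff hpk hk1] at h
  have h3 : (T : ℝ) = (p : ℝ) * (j' : ℝ) := by
    refine mul_right_cancel₀ hk1 (h.trans ?_)
    ring
  have h4 : T = p * j' := by exact_mod_cast h3
  exact core p (p - 3) k j j' hpq (by omega) h1 h2 h4
end
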